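/- (Boundary-strip estimate.) Let Ω ⊂ ℝ² be a nonempty bounded convex open set. There exists a constant C > 0, depending only on Ω, such that for every ε > 0 and every continuously differentiable function v : ℝ² → ℝ, ∫_{Ω_ε} |v(x)|² dx ≤ C ε ( ∫_Ω |v(x)|² dx + ∫_Ω |∇v(x)|² dx ), where Ω_ε := { x ∈ Ω : dist(x, ∂Ω) ≤ ε }. -/

import Mathlib

open MeasureTheory Metric Set
open scoped ENNReal

set_option maxHeartbeats 1000000

/-- First partial derivative `∂₁ f` of `f : ℝ² → ℝ`. -/
noncomputable def pd1 (f : ℝ × ℝ → ℝ) : ℝ × ℝ → ℝ := fun x => fderiv ℝ f x (1, 0)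

/-- Second partial derivative `∂₂ f` of `f : ℝ² → ℝ`. -/
noncomputable def pd2 (f : ℝ × ℝ → ℝ) : ℝ × ℝ → ℝ := fun x => fderiv ℝ f x (0, 1)

lemma map_affine (σ : ℝ) (hσ : 0 < σ) (c : ℝ × ℝ) :
    Measure.map (fun x => c + σ • (x - c)) (volume : Measure (ℝ×ℝ))
      = ENNReal.ofReal ((σ ^ 2)⁻¹) • volume := by
  have h1 : (fun x : ℝ×ℝ => c + σ • (x - c)) = (fun y => y + c) ∘ (σ • ·) ∘ (fun x => x + (-c)) := by
    funext x
    simp only [Function.comp_apply, smul_add, smul_neg, smul_sub]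
    abel
  have h2 : Measure.map (fun x : ℝ×ℝ => x + (-c)) volume = volume :=
    Measure.IsAddRightInvariant.map_add_right_eq_self _
  have h3 : Measure.map (fun y : ℝ×ℝ => y + c) volume = volume :=
    Measure.IsAddRightInvariant.map_add_right_eq_self _
  have h4 : Measure.map (σ • · : ℝ×ℝ → ℝ×ℝ) volume = ENNReal.ofReal ((σ ^ 2)⁻¹) • volume := by
    rw [Measure.map_addHaar_smul (volume) hσ.ne']
    congr 1
    rw [show Module.finrank ℝ (ℝ × ℝ) = 2 by simp, abs_of_nonneg (by positivity)]
  rw [h1, ← Measure.map_map (by fun_prop) (by fun_prop),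
    ← Measure.map_map (by fun_prop) (by fun_prop), h2, h4, Measure.map_smul, h3]

lemma oneD (h h' : ℝ → ℝ) (hd : ∀ t, HasDerivAt h (h' t) t)
    (hc : Continuous h) (hc' : Continuous h') {s : ℝ} (hs : s ∈ Set.Icc (0:ℝ) (1/2)) :
    h 0 ^ 2 ≤ h s ^ 2 + ∫ t in (0:ℝ)..(1/2), (h t ^ 2 + h' t ^ 2) := by
  have hsq : ∀ t : ℝ, HasDerivAt (fun u => h u ^ 2) (2 * h t * h' t) t := by
    intro t
    have := (hd t).fun_pow 2
    simpa [mul_comm, mul_assoc] using this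
  have hint1 : ∀ a b : ℝ, IntervalIntegrable (fun t => 2 * h t * h' t) volume a b := by
    intro a b; apply Continuous.intervalIntegrable; fun_prop
  have hint2 : ∀ a b : ℝ, IntervalIntegrable (fun t => h t ^ 2 + h' t ^ 2) volume a b := by
    intro a b; apply Continuous.intervalIntegrable; fun_prop
  have hint3 : ∀ a b : ℝ, IntervalIntegrable (fun t => -(2 * h t * h' t)) volume a b := by
    intro a b; apply Continuous.intervalIntegrable; fun_prop
  have ftc : ∫ t in (0:ℝ)..s, (2 * h t * h' t) = h s ^ 2 - h 0 ^ 2 :=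
    intervalIntegral.integral_eq_sub_of_hasDerivAt (fun t _ => hsq t) (hint1 0 s)
  have key : h 0 ^ 2 - h s ^ 2 = ∫ t in (0:ℝ)..s, (-(2 * h t * h' t)) := by
    rw [intervalIntegral.integral_neg, ftc]; ring
  have mono : (∫ t in (0:ℝ)..s, (-(2 * h t * h' t))) ≤ ∫ t in (0:ℝ)..s, (h t ^ 2 + h' t ^ 2) := by
    apply intervalIntegral.integral_mono_on hs.1 (hint3 0 s) (hint2 0 s)
    intro t _
    nlinarith [sq_nonneg (h t + h' t)]
  have ext : (∫ t in (0:ℝ)..s, (h t ^ 2 + h' t ^ 2))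
      ≤ ∫ t in (0:ℝ)..(1/2), (h t ^ 2 + h' t ^ 2) := by
    apply intervalIntegral.integral_mono_interval (a := 0) (c := 0) le_rfl hs.1 hs.2
    · filter_upwards with t using by positivity
    · exact hint2 0 (1/2)
  linarith

lemma fderiv_apply_eq (v : ℝ × ℝ → ℝ) (hv : Differentiable ℝ v) (y u : ℝ × ℝ) :
    fderiv ℝ v y u = u.1 * pd1 v y + u.2 * pd2 v y := by
  have hu : u = u.1 • ((1:ℝ),(0:ℝ)) + u.2 • ((0:ℝ),(1:ℝ)) := by
    ext <;> simp
  rw [pd1, pd2]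
  conv_lhs => rw [hu]
  rw [map_add, (fderiv ℝ v y).map_smul, (fderiv ℝ v y).map_smul]
  simp [smul_eq_mul]

lemma deriv_sq_bound (v : ℝ × ℝ → ℝ) (hv : Differentiable ℝ v) (y u : ℝ × ℝ) (R : ℝ)
    (hu : ‖u‖ ≤ R) :
    (fderiv ℝ v y u) ^ 2 ≤ 2 * R ^ 2 * (pd1 v y ^ 2 + pd2 v y ^ 2) := by
  rw [fderiv_apply_eq v hv y u]
  have h1 : |u.1| ≤ R := (norm_fst_le u |>.trans_eq rfl).trans hu
  have h2 : |u.2| ≤ R := (norm_snd_le u |>.trans_eq rfl).trans hu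
  have h1' : u.1 ^ 2 ≤ R ^ 2 := by rw [← sq_abs]; exact pow_le_pow_left₀ (abs_nonneg _) h1 2
  have h2' : u.2 ^ 2 ≤ R ^ 2 := by rw [← sq_abs]; exact pow_le_pow_left₀ (abs_nonneg _) h2 2
  nlinarith [sq_nonneg (u.1 * pd1 v y - u.2 * pd2 v y), sq_nonneg (pd1 v y), sq_nonneg (pd2 v y),
    sq_nonneg (u.1 * pd1 v y), sq_nonneg (u.2 * pd2 v y)]

lemma pointwise_est (v : ℝ × ℝ → ℝ) (hv : ContDiff ℝ 1 v) (c x : ℝ × ℝ) (R : ℝ)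
    (hR : ‖x - c‖ ≤ R) :
    v x ^ 2 ≤ ∫ t in (0:ℝ)..(1/2),
      (3 * v (c + (1-t) • (x-c)) ^ 2
        + 2 * R ^ 2 * (pd1 v (c + (1-t) • (x-c)) ^ 2 + pd2 v (c + (1-t) • (x-c)) ^ 2)) := by
  have hvd : Differentiable ℝ v := hv.differentiable one_ne_zero
  have hvc : Continuous v := hv.continuous
  have hγc : Continuous (fun t : ℝ => c + (1-t) • (x-c)) := by fun_prop
  have hγ : ∀ t : ℝ, HasDerivAt (fun t : ℝ => c + (1-t) • (x-c)) (-(x-c)) t := by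
    intro t
    have h1 : HasDerivAt (fun t : ℝ => (1-t)) (-1) t := by
      simpa using ((hasDerivAt_id t).const_sub 1)
    simpa using (h1.smul_const (x-c)).const_add c
  have hh : ∀ t : ℝ, HasDerivAt (fun t => v (c + (1-t) • (x-c)))
      (fderiv ℝ v (c + (1-t) • (x-c)) (-(x-c))) t := fun t =>
    (hvd _).hasFDerivAt.comp_hasDerivAt t (hγ t)
  have hfc : Continuous (fun y : ℝ×ℝ => fderiv ℝ v y) := hv.continuous_fderiv one_ne_zero
  have hh'c : Continuous (fun t : ℝ => fderiv ℝ v (c + (1-t) • (x-c)) (-(x-c))) :=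
    (hfc.comp hγc).clm_apply continuous_const
  have hhc : Continuous (fun t : ℝ => v (c + (1-t) • (x-c))) := hvc.comp hγc
  -- oneD for each s
  have step1 := fun (s : ℝ) (hs : s ∈ Set.Icc (0:ℝ) (1/2)) =>
    oneD _ _ hh hhc hh'c hs
  -- average over s
  set K : ℝ := ∫ t in (0:ℝ)..(1/2),
      ((v (c + (1-t) • (x-c))) ^ 2 + (fderiv ℝ v (c + (1-t) • (x-c)) (-(x-c))) ^ 2) with hK
  have havg : (1/2) * (v (c + (1-(0:ℝ)) • (x-c)) ^ 2)
      ≤ ∫ s in (0:ℝ)..(1/2), ((v (c + (1-s) • (x-c))) ^ 2 + K) := by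
    have := intervalIntegral.integral_mono_on (a := 0) (b := 1/2) (by norm_num)
      (intervalIntegrable_const (μ := volume) (c := v (c + (1-(0:ℝ)) • (x-c)) ^ 2))
      (by apply Continuous.intervalIntegrable; fun_prop)
      (fun s hs => step1 s hs)
    simpa [mul_comm] using this
  have hsplit : (∫ s in (0:ℝ)..(1/2), ((v (c + (1-s) • (x-c))) ^ 2 + K))
      = (∫ s in (0:ℝ)..(1/2), (v (c + (1-s) • (x-c))) ^ 2) + (1/2) * K := by
    rw [intervalIntegral.integral_add (by apply Continuous.intervalIntegrable; fun_prop)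
      (intervalIntegrable_const (μ := volume))]
    simp [mul_comm]
  have hKbound : K ≤ ∫ t in (0:ℝ)..(1/2),
      ((v (c + (1-t) • (x-c))) ^ 2
        + 2 * R ^ 2 * (pd1 v (c + (1-t) • (x-c)) ^ 2 + pd2 v (c + (1-t) • (x-c)) ^ 2)) := by
    rw [hK]
    apply intervalIntegral.integral_mono_on (by norm_num)
      (by apply Continuous.intervalIntegrable; fun_prop)
      (by
        apply Continuous.intervalIntegrable
        have h1 : Continuous (pd1 v) := (hfc.clm_apply continuous_const)
        have h2 : Continuous (pd2 v) := (hfc.clm_apply continuous_const)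
        fun_prop)
    intro t _
    have := deriv_sq_bound v hvd (c + (1-t) • (x-c)) (-(x-c)) R (by rw [norm_neg]; exact hR)
    linarith
  have hfinal : (∫ s in (0:ℝ)..(1/2), (v (c + (1-s) • (x-c))) ^ 2) * 2 + K
      ≤ ∫ t in (0:ℝ)..(1/2),
      (3 * v (c + (1-t) • (x-c)) ^ 2
        + 2 * R ^ 2 * (pd1 v (c + (1-t) • (x-c)) ^ 2 + pd2 v (c + (1-t) • (x-c)) ^ 2)) := by
    have hsum : (∫ t in (0:ℝ)..(1/2),
        (3 * v (c + (1-t) • (x-c)) ^ 2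
        + 2 * R ^ 2 * (pd1 v (c + (1-t) • (x-c)) ^ 2 + pd2 v (c + (1-t) • (x-c)) ^ 2)))
        = (∫ s in (0:ℝ)..(1/2), (v (c + (1-s) • (x-c))) ^ 2) * 2
          + ∫ t in (0:ℝ)..(1/2),
      ((v (c + (1-t) • (x-c))) ^ 2
        + 2 * R ^ 2 * (pd1 v (c + (1-t) • (x-c)) ^ 2 + pd2 v (c + (1-t) • (x-c)) ^ 2)) := by
      have h1 : Continuous (pd1 v) := (hfc.clm_apply continuous_const)
      have h2 : Continuous (pd2 v) := (hfc.clm_apply continuous_const)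
      have hdouble : (∫ s in (0:ℝ)..(1/2), (v (c + (1-s) • (x-c))) ^ 2) * 2
          = ∫ s in (0:ℝ)..(1/2), 2 * (v (c + (1-s) • (x-c))) ^ 2 := by
        rw [intervalIntegral.integral_const_mul]; ring
      rw [hdouble, ← intervalIntegral.integral_add
        (by apply Continuous.intervalIntegrable; fun_prop)
        (by apply Continuous.intervalIntegrable; fun_prop)]
      congr 1; funext t; ring
    rw [hsum]
    linarith
  have hx0 : c + (1-(0:ℝ)) • (x-c) = x := by simp
  rw [hx0] at havg
  linarith

lemma mem_contract {Ω : Set (ℝ×ℝ)} (hΩc : Convex ℝ Ω) {c : ℝ×ℝ} (hc : c ∈ Ω)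
    {y : ℝ×ℝ} (hy : y ∈ Ω) {lam : ℝ} (h0 : 0 ≤ lam) (h1 : lam ≤ 1) :
    c + lam • (y - c) ∈ Ω := by
  have h2 : lam • y + (1 - lam) • c ∈ Ω := hΩc hy hc h0 (by linarith) (by ring)
  have h3 : c + lam • (y - c) = lam • y + (1 - lam) • c := by
    rw [smul_sub, sub_smul, one_smul]; abel
  rw [h3]; exact h2

lemma infDist_ge {Ω : Set (ℝ×ℝ)} (hΩo : IsOpen Ω) (hΩc : Convex ℝ Ω) {c : ℝ×ℝ} {r : ℝ}
    (hball : ball c r ⊆ Ω) (hfr : (frontier Ω).Nonempty)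
    {y : ℝ×ℝ} (hy : y ∈ Ω) {s : ℝ} (hs0 : 0 < s) (hs1 : s ≤ 1) :
    s * r ≤ Metric.infDist (c + (1 - s) • (y - c)) (frontier Ω) := by
  by_contra hcon
  push_neg at hcon
  obtain ⟨z, hzfr, hzd⟩ := (Metric.infDist_lt_iff hfr).mp hcon
  set x : ℝ×ℝ := c + (1-s) • (y-c) with hxdef
  have hzx : ‖z - x‖ < s * r := by
    rw [← dist_eq_norm]; rw [dist_comm]; exact hzd
  have hz2 : z = (1-s) • y + s • (c + s⁻¹ • (z - x)) := by
    rw [smul_add, smul_smul, mul_inv_cancel₀ hs0.ne', one_smul, hxdef]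
    module
  have hzball : c + s⁻¹ • (z - x) ∈ ball c r := by
    rw [mem_ball, dist_eq_norm]
    have : c + s⁻¹ • (z - x) - c = s⁻¹ • (z - x) := by abel
    rw [this, norm_smul, norm_inv, Real.norm_eq_abs, abs_of_pos hs0]
    rw [inv_mul_lt_iff₀ hs0]
    linarith [hzx]
  have hzΩ : z ∈ Ω := by
    rw [hz2]
    exact hΩc hy (hball hzball) (by linarith) (le_of_lt hs0) (by ring)
  rw [hΩo.frontier_eq] at hzfr
  exact hzfr.2 hzΩ

lemma key_onesided {Ω : Set (ℝ×ℝ)} (hΩo : IsOpen Ω) (hΩc : Convex ℝ Ω) {c : ℝ×ℝ} {r ε : ℝ}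
    (hball : ball c r ⊆ Ω) (hfr : (frontier Ω).Nonempty) (hr : 0 < r) (hε : 0 < ε)
    (hs₀ : 2*ε/r ≤ 1/2)
    {t t' : ℝ} (ht : t ∈ Set.Icc (0:ℝ) (1/2)) (ht' : t' ∈ Set.Icc (0:ℝ) (1/2))
    {x x' : ℝ×ℝ} (hx : x ∈ Ω) (hxd : Metric.infDist x (frontier Ω) ≤ ε) (hx' : x' ∈ Ω)
    (heq : c + (1-t) • (x - c) = c + (1-t') • (x' - c)) :
    t' < t + 2*ε/r := by
  have hc : c ∈ Ω := hball (mem_ball_self hr)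
  set s₀ : ℝ := 2*ε/r with hs₀def
  have hs₀pos : 0 < s₀ := by positivity
  by_contra hcontra
  push_neg at hcontra   -- t + s₀ ≤ t'
  have h1t : (0:ℝ) < 1 - t := by linarith [ht.2]
  have h1t' : (0:ℝ) < 1 - t' := by linarith [ht'.2]
  have hlam : x - c = ((1-t')/(1-t)) • (x' - c) := by
    have h0 : (1-t) • (x - c) = (1-t') • (x' - c) := by
      have := heq
      rwa [add_right_inj] at this
    rw [div_eq_inv_mul, ← smul_smul, ← h0, smul_smul, inv_mul_cancel₀ h1t.ne', one_smul]
  have hμle : (1-t') ≤ (1-t)*(1-s₀) := by nlinarith [ht.1, hs₀pos]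
  set μ : ℝ := (1-t')/((1-t)*(1-s₀)) with hμdef
  have hden : 0 < (1-t)*(1-s₀) := by nlinarith
  have hμpos : 0 ≤ μ := le_of_lt (div_pos h1t' hden)
  have hμ1 : μ ≤ 1 := (div_le_one hden).mpr hμle
  have hy : c + μ • (x' - c) ∈ Ω := mem_contract hΩc hc hx' hμpos hμ1
  have hxy : x = c + (1 - s₀) • ((c + μ • (x' - c)) - c) := by
    have h5 : (c + μ • (x' - c)) - c = μ • (x' - c) := by abel
    rw [h5, smul_smul, hμdef]
    have h6 : (1 - s₀) * ((1-t')/((1-t)*(1-s₀))) = (1-t')/(1-t) := by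
      have hne : (1 - s₀) ≠ 0 := (by linarith : (0:ℝ) < 1 - s₀).ne'
      field_simp
    rw [h6, ← hlam]
    abel
  have hbig : s₀ * r ≤ Metric.infDist x (frontier Ω) := by
    rw [hxy]
    exact infDist_ge hΩo hΩc hball hfr hy hs₀pos (by linarith)
  have : s₀ * r = 2 * ε := by
    rw [hs₀def]; field_simp
  rw [this] at hbig
  linarith

lemma strip_est_small (Ω : Set (ℝ×ℝ)) (hΩo : IsOpen Ω) (hΩb : Bornology.IsBounded Ω)
    (hΩc : Convex ℝ Ω) (c : ℝ×ℝ) (r R ε : ℝ) (v : ℝ×ℝ → ℝ) (hv : ContDiff ℝ 1 v)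
    (hball : ball c r ⊆ Ω) (hΩR : Ω ⊆ ball c R) (hfr : (frontier Ω).Nonempty)
    (hr : 0 < r) (hε : 0 < ε) (hsmall : 2*ε/r ≤ 1/2) :
    (∫ x in {x ∈ Ω | Metric.infDist x (frontier Ω) ≤ ε}, (v x)^2)
      ≤ 16*ε/r * ∫ x in Ω, (3 * v x ^ 2 + 2 * R ^ 2 * (pd1 v x ^ 2 + pd2 v x ^ 2)) := by
  have hc : c ∈ Ω := hball (mem_ball_self hr)
  -- abbreviations
  set strip : Set (ℝ×ℝ) := {x ∈ Ω | Metric.infDist x (frontier Ω) ≤ ε} with hstripdef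
  set W : ℝ×ℝ → ℝ := fun z => 3 * v z ^ 2 + 2 * R ^ 2 * (pd1 v z ^ 2 + pd2 v z ^ 2) with hWdef
  set F : ℝ×ℝ → ℝ≥0∞ := fun z => ENNReal.ofReal (W z) with hFdef
  set Psi : ℝ → ℝ×ℝ → ℝ≥0∞ :=
    fun t z => Set.indicator strip (fun _ => (1:ℝ≥0∞)) (c + (1-t)⁻¹ • (z - c)) with hPsidef
  -- basic facts
  have hstripm : MeasurableSet strip := by
    have : strip = Ω ∩ {x : ℝ×ℝ | Metric.infDist x (frontier Ω) ≤ ε} := by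
      ext x; simp [hstripdef, Set.mem_sep_iff]
    rw [this]
    exact hΩo.measurableSet.inter
      ((isClosed_le (continuous_infDist_pt _) continuous_const).measurableSet)
  have hstripΩ : strip ⊆ Ω := fun x hx => hx.1
  have hfc : Continuous (fun y : ℝ×ℝ => fderiv ℝ v y) := hv.continuous_fderiv one_ne_zero
  have hpd1 : Continuous (pd1 v) := hfc.clm_apply continuous_const
  have hpd2 : Continuous (pd2 v) := hfc.clm_apply continuous_const
  have hvc : Continuous v := hv.continuous
  have hWc : Continuous W := by rw [hWdef]; fun_prop
  have hWnn : ∀ z, 0 ≤ W z := by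
    intro z; rw [hWdef]; positivity
  have hFm : Measurable F := (ENNReal.continuous_ofReal.comp hWc).measurable
  have hWint : IntegrableOn W Ω := by
    have hcl : IsCompact (closure Ω) := hΩb.isCompact_closure
    exact (hWc.continuousOn.integrableOn_compact hcl).mono_set subset_closure
  have hWi : 0 ≤ ∫ x in Ω, W x := setIntegral_nonneg hΩo.measurableSet fun x _ => hWnn x
  -- step 1: pointwise bound
  have hpoint : ∀ x ∈ strip, ENNReal.ofReal (v x ^ 2)
      ≤ ∫⁻ t in Set.Ioc (0:ℝ) (1/2), F (c + (1-t) • (x - c)) := by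
    intro x hx
    have hxR : ‖x - c‖ ≤ R := by
      have := hΩR (hstripΩ hx)
      rw [mem_ball, dist_eq_norm] at this
      exact this.le
    have hp := pointwise_est v hv c x R hxR
    have heq1 : (∫ t in (0:ℝ)..(1/2),
        (3 * v (c + (1-t) • (x-c)) ^ 2
        + 2 * R ^ 2 * (pd1 v (c + (1-t) • (x-c)) ^ 2 + pd2 v (c + (1-t) • (x-c)) ^ 2)))
        = ∫ t in Set.Ioc (0:ℝ) (1/2), W (c + (1-t) • (x-c)) := by
      rw [intervalIntegral.integral_of_le (by norm_num)]
    have hint : IntegrableOn (fun t => W (c + (1-t) • (x-c))) (Set.Ioc (0:ℝ) (1/2)) := by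
      apply Continuous.integrableOn_Ioc
      fun_prop
    calc ENNReal.ofReal (v x ^ 2)
        ≤ ENNReal.ofReal (∫ t in Set.Ioc (0:ℝ) (1/2), W (c + (1-t) • (x-c))) := by
          apply ENNReal.ofReal_le_ofReal
          rw [← heq1]; exact hp
      _ = ∫⁻ t in Set.Ioc (0:ℝ) (1/2), F (c + (1-t) • (x - c)) := by
          rw [hFdef]
          exact ofReal_integral_eq_lintegral_ofReal hint
            (Filter.Eventually.of_forall fun t => hWnn _)
  -- measurability for Tonelli
  have huncur1 : Measurable (Function.uncurry
      fun (x : ℝ×ℝ) (t : ℝ) => F (c + (1-t) • (x - c))) := by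
    apply hFm.comp
    have : Continuous (fun p : (ℝ×ℝ) × ℝ => c + (1-p.2) • (p.1 - c)) := by fun_prop
    exact this.measurable
  have huncur2 : Measurable (Function.uncurry fun (t : ℝ) (z : ℝ×ℝ) => Psi t z * F z) := by
    apply Measurable.mul
    · rw [hPsidef]
      have hm : Measurable (fun p : ℝ × (ℝ×ℝ) => c + (1-p.1)⁻¹ • (p.2 - c)) := by
        apply Measurable.const_add
        exact ((measurable_const.sub measurable_fst).inv).smul (measurable_snd.sub measurable_const)
      exact (measurable_const.indicator hstripm).comp hm
    · exact hFm.comp measurable_snd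
  -- first mono step
  have step2 : (∫⁻ x in strip, ENNReal.ofReal (v x ^ 2))
      ≤ ∫⁻ x in strip, ∫⁻ t in Set.Ioc (0:ℝ) (1/2), F (c + (1-t) • (x - c)) := by
    apply setLIntegral_mono _ hpoint
    exact Measurable.lintegral_prod_right huncur1
  -- swap 1
  have swap1 : (∫⁻ x in strip, ∫⁻ t in Set.Ioc (0:ℝ) (1/2), F (c + (1-t) • (x - c)))
      = ∫⁻ t in Set.Ioc (0:ℝ) (1/2), ∫⁻ x in strip, F (c + (1-t) • (x - c)) :=
    lintegral_lintegral_swap huncur1.aemeasurable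
  -- change of variables at fixed t
  have hcov : ∀ t ∈ Set.Ioc (0:ℝ) (1/2), (∫⁻ x in strip, F (c + (1-t) • (x - c)))
      ≤ 4 * ∫⁻ z, Psi t z * F z := by
    intro t ht
    have h1t : (0:ℝ) < 1 - t := by linarith [ht.2]
    have hiota : ∀ x : ℝ×ℝ, c + (1-t)⁻¹ • ((c + (1-t) • (x - c)) - c) = x := by
      intro x
      rw [add_sub_cancel_left, smul_smul, inv_mul_cancel₀ h1t.ne', one_smul]
      abel
    have hgm : Measurable fun z => Psi t z * F z := by
      apply Measurable.mul _ hFm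
      rw [hPsidef]
      have hm : Measurable (fun z : ℝ×ℝ => c + (1-t)⁻¹ • (z - c)) := by fun_prop
      exact (measurable_const.indicator hstripm).comp hm
    have hem : Measurable fun x : ℝ×ℝ => c + (1-t) • (x - c) := by fun_prop
    calc (∫⁻ x in strip, F (c + (1-t) • (x - c)))
        = ∫⁻ x, strip.indicator (fun y => F (c + (1-t) • (y - c))) x := by
          rw [lintegral_indicator hstripm]
      _ = ∫⁻ x, Psi t (c + (1-t) • (x - c)) * F (c + (1-t) • (x - c)) := by
          apply lintegral_congr
          intro x
          rw [hPsidef]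
          simp only []
          rw [hiota x]
          by_cases hx : x ∈ strip
          · rw [Set.indicator_of_mem hx, Set.indicator_of_mem hx, one_mul]
          · rw [Set.indicator_of_notMem hx, Set.indicator_of_notMem hx, zero_mul]
      _ = ∫⁻ z, Psi t z * F z ∂(Measure.map (fun x => c + (1-t) • (x - c)) volume) :=
          (lintegral_map hgm hem).symm
      _ = ENNReal.ofReal (((1-t)^2)⁻¹) * ∫⁻ z, Psi t z * F z := by
          rw [map_affine _ h1t, lintegral_smul_measure, smul_eq_mul]
      _ ≤ 4 * ∫⁻ z, Psi t z * F z := by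
          apply mul_le_mul_left
          have h14 : ((1-t)^2)⁻¹ ≤ (4:ℝ) := by
            have h2 : (1/4:ℝ) ≤ (1-t)^2 := by nlinarith [ht.2]
            calc ((1-t)^2)⁻¹ ≤ ((1/4:ℝ))⁻¹ := by
                  apply inv_anti₀ (by norm_num) h2
              _ = 4 := by norm_num
          calc ENNReal.ofReal (((1-t)^2)⁻¹) ≤ ENNReal.ofReal 4 := ENNReal.ofReal_le_ofReal h14
            _ = 4 := by simp [ENNReal.ofReal_ofNat]
  -- covering bound
  have hcover : ∀ z : ℝ×ℝ, (∫⁻ t in Set.Ioc (0:ℝ) (1/2), Psi t z)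
      ≤ ENNReal.ofReal (4*ε/r) * Set.indicator Ω (fun _ => (1:ℝ≥0∞)) z := by
    intro z
    set T : Set ℝ := {t : ℝ | c + (1-t)⁻¹ • (z - c) ∈ strip} with hTdef
    have hTmap : Measurable (fun t : ℝ => c + (1-t)⁻¹ • (z - c)) := by
      apply Measurable.const_add
      exact ((measurable_const.sub measurable_id).inv).smul measurable_const
    have hTm : MeasurableSet T := hTmap hstripm
    have hint2 : (∫⁻ t in Set.Ioc (0:ℝ) (1/2), Psi t z)
        = volume (T ∩ Set.Ioc 0 (1/2)) := by
      have hpsieq : (fun t => Psi t z) = T.indicator (fun _ => (1:ℝ≥0∞)) := by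
        funext t
        rw [hPsidef]
        simp only []
        by_cases h : c + (1-t)⁻¹ • (z - c) ∈ strip
        · rw [Set.indicator_of_mem h, Set.indicator_of_mem (by exact h : t ∈ T)]
        · rw [Set.indicator_of_notMem h, Set.indicator_of_notMem (by exact h : t ∉ T)]
      rw [hpsieq, lintegral_indicator hTm, setLIntegral_one, Measure.restrict_apply hTm]
    rw [hint2]
    by_cases hzΩ : z ∈ Ω
    · rw [Set.indicator_of_mem hzΩ, mul_one]
      rcases Set.eq_empty_or_nonempty (T ∩ Set.Ioc 0 (1/2)) with hemp | ⟨t₀, ht₀⟩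
      · rw [hemp]; simp
      · have hsub : T ∩ Set.Ioc (0:ℝ) (1/2) ⊆ Set.Icc (t₀ - 2*ε/r) (t₀ + 2*ε/r) := by
          intro t ht'
          have hxt := ht'.1
          have hxt₀ := ht₀.1
          have h1t : (0:ℝ) < 1 - t := by linarith [ht'.2.2]
          have h1t₀ : (0:ℝ) < 1 - t₀ := by linarith [ht₀.2.2]
          have heq : c + (1-t) • ((c + (1-t)⁻¹ • (z - c)) - c)
              = c + (1-t₀) • ((c + (1-t₀)⁻¹ • (z - c)) - c) := by
            rw [add_sub_cancel_left, add_sub_cancel_left, smul_smul, smul_smul,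
              mul_inv_cancel₀ h1t.ne', mul_inv_cancel₀ h1t₀.ne']
          have key1 := key_onesided hΩo hΩc hball hfr hr hε hsmall
            ⟨ht'.2.1.le, ht'.2.2⟩ ⟨ht₀.2.1.le, ht₀.2.2⟩
            (hstripΩ hxt) hxt.2 (hstripΩ hxt₀) heq
          have key2 := key_onesided hΩo hΩc hball hfr hr hε hsmall
            ⟨ht₀.2.1.le, ht₀.2.2⟩ ⟨ht'.2.1.le, ht'.2.2⟩
            (hstripΩ hxt₀) hxt₀.2 (hstripΩ hxt) heq.symm
          constructor <;> [linarith [key2]; linarith [key1]]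
        calc volume (T ∩ Set.Ioc 0 (1/2))
            ≤ volume (Set.Icc (t₀ - 2*ε/r) (t₀ + 2*ε/r)) := measure_mono hsub
          _ = ENNReal.ofReal (4*ε/r) := by rw [Real.volume_Icc]; congr 1; ring
    · have hTemp : T ∩ Set.Ioc (0:ℝ) (1/2) = ∅ := by
        ext t
        simp only [Set.mem_inter_iff, Set.mem_empty_iff_false, iff_false, not_and]
        intro htT ht2
        exfalso
        apply hzΩ
        have h1t : (0:ℝ) < 1 - t := by linarith [ht2.2]
        have hzz : z = c + (1-t) • ((c + (1-t)⁻¹ • (z - c)) - c) := by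
          rw [add_sub_cancel_left, smul_smul, mul_inv_cancel₀ h1t.ne', one_smul]
          abel
        rw [hzz]
        exact mem_contract hΩc hc (hstripΩ htT) (by linarith) (by linarith [ht2.1])
      rw [hTemp, Set.indicator_of_notMem hzΩ, mul_zero]
      simp
  -- assemble the ℝ≥0∞ chain
  have hzero : (∫⁻ x in strip, ENNReal.ofReal (v x ^ 2))
      ≤ ENNReal.ofReal (16*ε/r) * ∫⁻ z in Ω, F z := by
    calc (∫⁻ x in strip, ENNReal.ofReal (v x ^ 2))
        ≤ ∫⁻ x in strip, ∫⁻ t in Set.Ioc (0:ℝ) (1/2), F (c + (1-t) • (x - c)) := step2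
      _ = ∫⁻ t in Set.Ioc (0:ℝ) (1/2), ∫⁻ x in strip, F (c + (1-t) • (x - c)) := swap1
      _ ≤ ∫⁻ t in Set.Ioc (0:ℝ) (1/2), 4 * ∫⁻ z, Psi t z * F z := by
          apply setLIntegral_mono _ hcov
          exact (Measurable.lintegral_prod_right huncur2).const_mul 4
      _ = 4 * ∫⁻ t in Set.Ioc (0:ℝ) (1/2), ∫⁻ z, Psi t z * F z :=
          lintegral_const_mul' 4 _ (by norm_num)
      _ = 4 * ∫⁻ z, ∫⁻ t in Set.Ioc (0:ℝ) (1/2), Psi t z * F z := by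
          rw [lintegral_lintegral_swap huncur2.aemeasurable]
      _ = 4 * ∫⁻ z, (∫⁻ t in Set.Ioc (0:ℝ) (1/2), Psi t z) * F z := by
          congr 1
          exact lintegral_congr fun z => lintegral_mul_const' _ _ ENNReal.ofReal_ne_top
      _ ≤ 4 * ∫⁻ z, (ENNReal.ofReal (4*ε/r) * Set.indicator Ω (fun _ => (1:ℝ≥0∞)) z) * F z := by
          apply mul_le_mul_right
          apply lintegral_mono
          intro z
          exact mul_le_mul_left (hcover z) _
      _ = 4 * (ENNReal.ofReal (4*ε/r) * ∫⁻ z, Set.indicator Ω (fun _ => (1:ℝ≥0∞)) z * F z) := by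
          congr 1
          rw [← lintegral_const_mul' _ _ ENNReal.ofReal_ne_top]
          apply lintegral_congr
          intro z
          ring
      _ = 4 * (ENNReal.ofReal (4*ε/r) * ∫⁻ z in Ω, F z) := by
          congr 2
          have : ∀ z, Set.indicator Ω (fun _ => (1:ℝ≥0∞)) z * F z = Set.indicator Ω F z := by
            intro z
            by_cases hz : z ∈ Ω
            · rw [Set.indicator_of_mem hz, Set.indicator_of_mem hz, one_mul]
            · rw [Set.indicator_of_notMem hz, Set.indicator_of_notMem hz, zero_mul]
          rw [lintegral_congr this, lintegral_indicator hΩo.measurableSet]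
      _ = ENNReal.ofReal (16*ε/r) * ∫⁻ z in Ω, F z := by
          rw [← mul_assoc]
          congr 1
          rw [show (4:ℝ≥0∞) = ENNReal.ofReal 4 by simp [ENNReal.ofReal_ofNat],
            ← ENNReal.ofReal_mul (by norm_num)]
          congr 1
          ring
  -- back to Bochner integrals
  have hΩF : (∫⁻ z in Ω, F z) = ENNReal.ofReal (∫ x in Ω, W x) := by
    rw [hFdef]
    exact (ofReal_integral_eq_lintegral_ofReal hWint
      (Filter.Eventually.of_forall fun x => hWnn x)).symm
  have hlhs : (∫ x in strip, v x ^ 2)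
      = (∫⁻ x in strip, ENNReal.ofReal (v x ^ 2)).toReal := by
    apply integral_eq_lintegral_of_nonneg_ae
    · exact Filter.Eventually.of_forall fun x => sq_nonneg _
    · exact (hvc.pow 2).aestronglyMeasurable
  rw [hlhs]
  have hchain : (∫⁻ x in strip, ENNReal.ofReal (v x ^ 2))
      ≤ ENNReal.ofReal (16*ε/r * ∫ x in Ω, W x) := by
    rw [ENNReal.ofReal_mul (by positivity)]
    rw [← hΩF]
    exact hzero
  calc (∫⁻ x in strip, ENNReal.ofReal (v x ^ 2)).toReal
      ≤ (ENNReal.ofReal (16*ε/r * ∫ x in Ω, W x)).toReal :=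
        ENNReal.toReal_mono ENNReal.ofReal_ne_top hchain
    _ = 16*ε/r * ∫ x in Ω, W x := ENNReal.toReal_ofReal (by positivity)

/-- Boundary-strip estimate: for a nonempty bounded convex open set `Ω ⊂ ℝ²`, there is
`C > 0`, depending only on `Ω`, such that for every `ε > 0` and every `C¹` function
`v : ℝ² → ℝ`, `∫_{Ω_ε} |v|² ≤ C ε (∫_Ω |v|² + ∫_Ω |∇v|²)`, where
`Ω_ε = {x ∈ Ω | dist(x, ∂Ω) ≤ ε}`. -/
theorem boundary_strip_estimate (Ω : Set (ℝ × ℝ)) (hne : Ω.Nonempty)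
    (hΩo : IsOpen Ω) (hΩb : Bornology.IsBounded Ω) (hΩc : Convex ℝ Ω) :
    ∃ C : ℝ, 0 < C ∧
      ∀ ε : ℝ, 0 < ε → ∀ v : ℝ × ℝ → ℝ, ContDiff ℝ 1 v →
        (∫ x in {x ∈ Ω | Metric.infDist x (frontier Ω) ≤ ε}, (v x) ^ 2) ≤
          C * ε * ((∫ x in Ω, (v x) ^ 2) +
            ∫ x in Ω, ((pd1 v x) ^ 2 + (pd2 v x) ^ 2)) := by
  obtain ⟨c, hcΩ⟩ := hne
  obtain ⟨r, hr, hball⟩ := Metric.isOpen_iff.mp hΩo c hcΩ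
  obtain ⟨R, hrR, hΩR⟩ := hΩb.subset_ball_lt r c
  have hR : 0 < R := lt_trans hr hrR
  have hfr : (frontier Ω).Nonempty := by
    rw [nonempty_frontier_iff]
    refine ⟨⟨c, hcΩ⟩, ?_⟩
    intro h
    have hmem : c + ((R+1 : ℝ), (0:ℝ)) ∈ Metric.ball c R := hΩR (by rw [h]; trivial)
    rw [mem_ball, dist_eq_norm, add_sub_cancel_left] at hmem
    have : ‖((R+1 : ℝ), (0:ℝ))‖ = R + 1 := by
      rw [Prod.norm_def]
      simp only [Real.norm_eq_abs, abs_zero]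
      rw [abs_of_nonneg (by linarith : (0:ℝ) ≤ R + 1)]
      exact max_eq_left (by linarith)
    rw [this] at hmem
    linarith
  set C : ℝ := 48/r + 32*R^2/r + 4/r + 1 with hC
  have hCpos : 0 < C := by positivity
  refine ⟨C, hCpos, ?_⟩
  intro ε hε v hv
  have hvc : Continuous v := hv.continuous
  have hfc : Continuous (fun y : ℝ×ℝ => fderiv ℝ v y) := hv.continuous_fderiv one_ne_zero
  have hpd1 : Continuous (pd1 v) := hfc.clm_apply continuous_const
  have hpd2 : Continuous (pd2 v) := hfc.clm_apply continuous_const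
  have hcl : IsCompact (closure Ω) := hΩb.isCompact_closure
  have hv2int : IntegrableOn (fun x => v x ^ 2) Ω := by
    refine (ContinuousOn.integrableOn_compact hcl ?_).mono_set subset_closure
    exact (hvc.pow 2).continuousOn
  have hwint : IntegrableOn (fun x => pd1 v x ^ 2 + pd2 v x ^ 2) Ω := by
    refine (ContinuousOn.integrableOn_compact hcl ?_).mono_set subset_closure
    exact ((hpd1.pow 2).add (hpd2.pow 2)).continuousOn
  have hB1 : 0 ≤ ∫ x in Ω, v x ^ 2 :=
    setIntegral_nonneg hΩo.measurableSet fun x _ => sq_nonneg _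
  have hB2 : 0 ≤ ∫ x in Ω, (pd1 v x ^ 2 + pd2 v x ^ 2) :=
    setIntegral_nonneg hΩo.measurableSet fun x _ => by positivity
  by_cases hcase : 2*ε/r ≤ 1/2
  · -- small ε
    have hmain := strip_est_small Ω hΩo hΩb hΩc c r R ε v hv hball hΩR hfr hr hε hcase
    have hWsplit : (∫ x in Ω, (3 * v x ^ 2 + 2 * R ^ 2 * (pd1 v x ^ 2 + pd2 v x ^ 2)))
        = 3*(∫ x in Ω, v x ^ 2) + 2*R^2*(∫ x in Ω, (pd1 v x ^ 2 + pd2 v x ^ 2)) := by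
      rw [integral_add (hv2int.const_mul 3) (hwint.const_mul (2*R^2)),
        integral_const_mul, integral_const_mul]
    rw [hWsplit] at hmain
    refine hmain.trans ?_
    set B1 := ∫ x in Ω, v x ^ 2
    set B2 := ∫ x in Ω, (pd1 v x ^ 2 + pd2 v x ^ 2)
    have he1 : 0 ≤ ε * B1 := mul_nonneg hε.le hB1
    have he2 : 0 ≤ ε * B2 := mul_nonneg hε.le hB2
    have hq1 : 16*ε/r*(3*B1 + 2*R^2*B2) = (48/r)*(ε*B1) + (32*R^2/r)*(ε*B2) := by
      field_simp
      ring
    have hq2 : C * ε * (B1 + B2) = C*(ε*B1) + C*(ε*B2) := by ring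
    rw [hq1, hq2]
    have hCa : 48/r ≤ C := by
      rw [hC]
      have : 0 ≤ 32*R^2/r + 4/r + 1 := by positivity
      linarith
    have hCb : 32*R^2/r ≤ C := by
      rw [hC]
      have h1 : 0 ≤ 48/r := by positivity
      have h2 : 0 ≤ 4/r := by positivity
      linarith
    exact add_le_add (mul_le_mul_of_nonneg_right hCa he1)
      (mul_le_mul_of_nonneg_right hCb he2)
  · -- large ε
    push_neg at hcase
    have hεlarge : r/4 < ε := by
      rw [div_lt_div_iff₀ (by norm_num) hr] at hcase
      linarith
    have hstripsub : (∫ x in {x ∈ Ω | Metric.infDist x (frontier Ω) ≤ ε}, (v x) ^ 2)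
        ≤ ∫ x in Ω, v x ^ 2 := by
      apply setIntegral_mono_set hv2int
        (Filter.Eventually.of_forall fun x => sq_nonneg _)
      exact HasSubset.Subset.eventuallyLE fun x hx => hx.1
    refine hstripsub.trans ?_
    have hone : 1 ≤ C * ε := by
      have h4r : 4/r ≤ C := by
        rw [hC]
        have h1 : 0 ≤ 48/r := by positivity
        have h2 : 0 ≤ 32*R^2/r := by positivity
        linarith
      have : (4/r) * (r/4) = 1 := by field_simp
      calc (1:ℝ) = (4/r) * (r/4) := this.symm
        _ ≤ C * ε := by
            apply mul_le_mul h4r hεlarge.le (by positivity) hCpos.le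
    calc (∫ x in Ω, v x ^ 2) = 1 * (∫ x in Ω, v x ^ 2) := (one_mul _).symm
      _ ≤ (C * ε) * ((∫ x in Ω, v x ^ 2) + ∫ x in Ω, (pd1 v x ^ 2 + pd2 v x ^ 2)) := by
          apply mul_le_mul hone (by linarith) hB1 (by linarith)
      _ = C * ε * ((∫ x in Ω, v x ^ 2) + ∫ x in Ω, (pd1 v x ^ 2 + pd2 v x ^ 2)) := by ring
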